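/- Let H be a Poisson algebra that is also a Poisson Hopf-Galois algebra with Hopf-Galois map μ. If there exists an algebra map α : H → k with {H, H} ⊆ ker α, then H is a Poisson Hopf algebra with counit α, comultiplication Δ(x) = α(x₍₂₎) x₍₁₎ ⊗ x₍₃₎, and antipode S(x) = α(x₍₁₎x₍₃₎) x₍₂₎; in particular Δ({x,y}) = {Δ(x), Δ(y)}_{H⊗H} for all x, y ∈ H. -/
import Mathlib


open TensorProduct
set_option synthInstance.maxHeartbeats 1000000
set_option maxHeartbeats 1000000

noncomputable section

variable (k : Type*) [Field k]
variable (H : Type*) [CommRing H] [Algebra k H]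

abbrev T3 := H ⊗[k] (H ⊗[k] H)

def rightContr : T3 k H →ₗ[k] H ⊗[k] H :=
  TensorProduct.map LinearMap.id (LinearMap.mul' k H)

def leftContr : T3 k H →ₗ[k] H ⊗[k] H :=
  (TensorProduct.map (LinearMap.mul' k H) LinearMap.id)
    ∘ₗ (TensorProduct.assoc k H H H).symm.toLinearMap

structure IsHopfGaloisMap (μ : H →ₐ[k] T3 k H) : Prop where
  coassoc :
    (TensorProduct.map LinearMap.id (TensorProduct.map LinearMap.id μ.toLinearMap))
        ∘ₗ μ.toLinearMap =
      (TensorProduct.map LinearMap.id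
          (TensorProduct.assoc k H H (H ⊗[k] H)).toLinearMap)
        ∘ₗ (TensorProduct.assoc k H (H ⊗[k] H) (H ⊗[k] H)).toLinearMap
        ∘ₗ (TensorProduct.map μ.toLinearMap LinearMap.id)
        ∘ₗ μ.toLinearMap
  counit_right : ∀ r : H, rightContr k H (μ r) = r ⊗ₜ[k] (1 : H)
  counit_left : ∀ r : H, leftContr k H (μ r) = (1 : H) ⊗ₜ[k] r

structure IsPoissonBracket (br : H →ₗ[k] H →ₗ[k] H) : Prop where
  self : ∀ a : H, br a a = 0
  jacobi : ∀ a b c : H, br a (br b c) + br b (br c a) + br c (br a b) = 0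
  leibniz : ∀ a b c : H, br a (b * c) = br a b * c + b * br a c

/-- The bracket `{x⊗y⊗z, x'⊗y'⊗z'} = {x,x'}⊗yy'⊗zz' - xx'⊗{y,y'}⊗zz' + xx'⊗yy'⊗{z,z'}`. -/
def pbrT3 (br : H →ₗ[k] H →ₗ[k] H) (u v : T3 k H) : T3 k H :=
  TensorProduct.map₂ br
      (TensorProduct.map₂ (LinearMap.mul k H) (LinearMap.mul k H)) u v
    - TensorProduct.map₂ (LinearMap.mul k H)
        (TensorProduct.map₂ br (LinearMap.mul k H)) u v
    + TensorProduct.map₂ (LinearMap.mul k H)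
        (TensorProduct.map₂ (LinearMap.mul k H) br) u v

/-- The bracket `{a⊗b, a'⊗b'} = aa' ⊗ {b,b'} + {a,a'} ⊗ bb'` on `H ⊗ H`. -/
def pbrT2 (br : H →ₗ[k] H →ₗ[k] H) (u v : H ⊗[k] H) : H ⊗[k] H :=
  TensorProduct.map₂ (LinearMap.mul k H) br u v
    + TensorProduct.map₂ br (LinearMap.mul k H) u v

/-- `Δ(x) = α(x₍₂₎) x₍₁₎ ⊗ x₍₃₎`. -/
def comulOf (μ : H →ₐ[k] T3 k H) (α : H →ₐ[k] k) : H →ₗ[k] H ⊗[k] H :=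
  (TensorProduct.map LinearMap.id
      ((TensorProduct.lid k H).toLinearMap
        ∘ₗ TensorProduct.map α.toLinearMap LinearMap.id))
    ∘ₗ μ.toLinearMap

/-- `S(x) = α(x₍₁₎x₍₃₎) x₍₂₎`. -/
def antipodeOf (μ : H →ₐ[k] T3 k H) (α : H →ₐ[k] k) : H →ₗ[k] H :=
  (TensorProduct.rid k H).toLinearMap
    ∘ₗ (TensorProduct.lid k (H ⊗[k] k)).toLinearMap
    ∘ₗ (TensorProduct.map α.toLinearMap
          (TensorProduct.map LinearMap.id α.toLinearMap))
    ∘ₗ μ.toLinearMap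

/-! ### Auxiliary machinery -/

lemma leftContr_tmul (a b c : H) : leftContr k H (a ⊗ₜ (b ⊗ₜ c)) = (a * b) ⊗ₜ[k] c := by
  simp [leftContr]

lemma rightContr_tmul (a b c : H) : rightContr k H (a ⊗ₜ (b ⊗ₜ c)) = a ⊗ₜ[k] (b * c) := by
  simp [rightContr]

variable (α : H →ₐ[k] k)

def phi : T3 k H →ₗ[k] H ⊗[k] H :=
  TensorProduct.map LinearMap.id
      ((TensorProduct.lid k H).toLinearMap ∘ₗ TensorProduct.map α.toLinearMap LinearMap.id)

lemma phi_tmul (a b c : H) :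
    phi k H α (a ⊗ₜ (b ⊗ₜ c)) = α b • (a ⊗ₜ[k] c) := by
  simp [phi, TensorProduct.tmul_smul]

def eta : T3 k H →ₗ[k] H :=
  (TensorProduct.rid k H).toLinearMap
    ∘ₗ (TensorProduct.lid k (H ⊗[k] k)).toLinearMap
    ∘ₗ (TensorProduct.map α.toLinearMap
          (TensorProduct.map LinearMap.id α.toLinearMap))

lemma eta_tmul (a b c : H) : eta k H α (a ⊗ₜ (b ⊗ₜ c)) = (α a * α c) • b := by
  simp [eta, TensorProduct.smul_tmul', mul_comm, smul_smul]

def rho : T3 k H →ₗ[k] H :=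
  (TensorProduct.lid k H).toLinearMap
    ∘ₗ TensorProduct.map α.toLinearMap
        ((TensorProduct.lid k H).toLinearMap ∘ₗ TensorProduct.map α.toLinearMap LinearMap.id)

lemma rho_tmul (a b c : H) : rho k H α (a ⊗ₜ (b ⊗ₜ c)) = (α a * α b) • c := by
  simp [rho, TensorProduct.tmul_smul, smul_smul, mul_comm]

def sigma : T3 k H →ₗ[k] H :=
  (TensorProduct.rid k H).toLinearMap
    ∘ₗ TensorProduct.map LinearMap.id (α.toLinearMap ∘ₗ LinearMap.mul' k H)

lemma sigma_tmul (a b c : H) : sigma k H α (a ⊗ₜ (b ⊗ₜ c)) = (α b * α c) • a := by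
  simp [sigma]

def psi : H ⊗[k] (H ⊗[k] T3 k H) →ₗ[k] H ⊗[k] (H ⊗[k] H) :=
  TensorProduct.map LinearMap.id
    ((TensorProduct.lid k (H ⊗[k] H)).toLinearMap
      ∘ₗ TensorProduct.map α.toLinearMap (phi k H α))

lemma psi_tmul (a b : H) (w : T3 k H) :
    psi k H α (a ⊗ₜ (b ⊗ₜ w)) = α b • (a ⊗ₜ phi k H α w) := by
  simp [psi, TensorProduct.tmul_smul]

def chi1 : H ⊗[k] (H ⊗[k] T3 k H) →ₗ[k] H :=
  (TensorProduct.lid k H).toLinearMap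
    ∘ₗ TensorProduct.map α.toLinearMap
        (LinearMap.mul' k H ∘ₗ TensorProduct.map LinearMap.id (rho k H α))

lemma chi1_tmul (a b : H) (w : T3 k H) :
    chi1 k H α (a ⊗ₜ (b ⊗ₜ w)) = α a • (b * rho k H α w) := by
  simp [chi1]

def chi2 : H ⊗[k] (H ⊗[k] T3 k H) →ₗ[k] H :=
  LinearMap.mul' k H
    ∘ₗ TensorProduct.map LinearMap.id
        ((TensorProduct.lid k H).toLinearMap
          ∘ₗ TensorProduct.map α.toLinearMap (eta k H α))

lemma chi2_tmul (a b : H) (w : T3 k H) :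
    chi2 k H α (a ⊗ₜ (b ⊗ₜ w)) = α b • (a * eta k H α w) := by
  simp [chi2, TensorProduct.tmul_smul, mul_smul_comm]

/-- Two linear maps out of `T3` that agree on pure tensors agree everywhere. -/
lemma t3_eq {P : Type*} [AddCommMonoid P] [Module k P] (f g : T3 k H →ₗ[k] P)
    (h : ∀ a b c : H, f (a ⊗ₜ (b ⊗ₜ c)) = g (a ⊗ₜ (b ⊗ₜ c))) : ∀ u, f u = g u := by
  intro u
  induction u using TensorProduct.induction_on with
  | zero => simp
  | tmul a w =>
    induction w using TensorProduct.induction_on with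
    | zero => simp
    | tmul b c => exact h a b c
    | add w₁ w₂ h₁ h₂ => simp only [tmul_add, map_add, h₁, h₂]
  | add u₁ u₂ h₁ h₂ => simp only [map_add, h₁, h₂]

section Mu
variable (μ : H →ₐ[k] T3 k H)

lemma comulOf_eq (x : H) : comulOf k H μ α x = phi k H α (μ x) := rfl

lemma antipodeOf_eq (x : H) : antipodeOf k H μ α x = eta k H α (μ x) := rfl

lemma phi_mul : ∀ u v : T3 k H, phi k H α (u * v) = phi k H α u * phi k H α v := by
  intro u v
  induction u using TensorProduct.induction_on with
  | zero => simp
  | add u₁ u₂ h₁ h₂ => simp only [add_mul, map_add, h₁, h₂]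
  | tmul a w =>
    induction w using TensorProduct.induction_on with
    | zero => simp
    | add w₁ w₂ h₁ h₂ => simp only [tmul_add, add_mul, map_add, h₁, h₂]
    | tmul b c =>
      induction v using TensorProduct.induction_on with
      | zero => simp
      | add v₁ v₂ h₁ h₂ => simp only [mul_add, map_add, h₁, h₂]
      | tmul a' w' =>
        induction w' using TensorProduct.induction_on with
        | zero => simp
        | add w₁ w₂ h₁ h₂ => simp only [tmul_add, mul_add, map_add, h₁, h₂]
        | tmul b' c' =>
          simp only [Algebra.TensorProduct.tmul_mul_tmul, phi_tmul, map_mul]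
          rw [smul_mul_smul_comm, Algebra.TensorProduct.tmul_mul_tmul]

lemma phi_one : phi k H α (1 : T3 k H) = 1 := by
  simp [Algebra.TensorProduct.one_def, phi_tmul]

lemma rho_eq : ∀ u : T3 k H,
    rho k H α u =
      (TensorProduct.lid k H) ((TensorProduct.map α.toLinearMap LinearMap.id)
        (leftContr k H u)) := by
  have := t3_eq k H (rho k H α)
    ((TensorProduct.lid k H).toLinearMap ∘ₗ (TensorProduct.map α.toLinearMap LinearMap.id)
      ∘ₗ leftContr k H) ?_
  · intro u; simpa using this u
  · intro a b c
    simp [rho_tmul, leftContr_tmul]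

lemma sigma_eq : ∀ u : T3 k H,
    sigma k H α u =
      (TensorProduct.rid k H) ((TensorProduct.map LinearMap.id α.toLinearMap)
        (rightContr k H u)) := by
  have := t3_eq k H (sigma k H α)
    ((TensorProduct.rid k H).toLinearMap ∘ₗ (TensorProduct.map LinearMap.id α.toLinearMap)
      ∘ₗ rightContr k H) ?_
  · intro u; simpa using this u
  · intro a b c
    simp [sigma_tmul, rightContr_tmul, mul_comm]

lemma counitL : ∀ u : T3 k H,
    (TensorProduct.lid k H) ((TensorProduct.map α.toLinearMap LinearMap.id) (phi k H α u)) =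
      (TensorProduct.lid k H) ((TensorProduct.map α.toLinearMap LinearMap.id)
        (leftContr k H u)) := by
  have := t3_eq k H
    ((TensorProduct.lid k H).toLinearMap ∘ₗ (TensorProduct.map α.toLinearMap LinearMap.id)
      ∘ₗ phi k H α)
    ((TensorProduct.lid k H).toLinearMap ∘ₗ (TensorProduct.map α.toLinearMap LinearMap.id)
      ∘ₗ leftContr k H) ?_
  · intro u; simpa using this u
  · intro a b c
    simp [phi_tmul, leftContr_tmul, smul_smul, mul_comm]

lemma counitR : ∀ u : T3 k H,
    (TensorProduct.rid k H) ((TensorProduct.map LinearMap.id α.toLinearMap) (phi k H α u)) =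
      (TensorProduct.rid k H) ((TensorProduct.map LinearMap.id α.toLinearMap)
        (rightContr k H u)) := by
  have := t3_eq k H
    ((TensorProduct.rid k H).toLinearMap ∘ₗ (TensorProduct.map LinearMap.id α.toLinearMap)
      ∘ₗ phi k H α)
    ((TensorProduct.rid k H).toLinearMap ∘ₗ (TensorProduct.map LinearMap.id α.toLinearMap)
      ∘ₗ rightContr k H) ?_
  · intro u; simpa using this u
  · intro a b c
    simp [phi_tmul, rightContr_tmul, smul_smul, mul_comm]

lemma stepA : ∀ u : T3 k H,
    (TensorProduct.map LinearMap.id (comulOf k H μ α)) (phi k H α u) =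
      psi k H α ((TensorProduct.map LinearMap.id
        (TensorProduct.map LinearMap.id μ.toLinearMap)) u) := by
  have := t3_eq k H
    ((TensorProduct.map LinearMap.id (comulOf k H μ α)) ∘ₗ phi k H α)
    (psi k H α ∘ₗ (TensorProduct.map LinearMap.id
      (TensorProduct.map LinearMap.id μ.toLinearMap))) ?_
  · intro u; simpa using this u
  · intro a b c
    simp [phi_tmul, psi_tmul, comulOf_eq]

lemma stepE : ∀ v : T3 k H, ∀ b c : H,
    α b • (TensorProduct.assoc k H H H) ((phi k H α v) ⊗ₜ c) =
      psi k H α ((TensorProduct.map LinearMap.id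
          (TensorProduct.assoc k H H (H ⊗[k] H)).toLinearMap)
        ((TensorProduct.assoc k H (H ⊗[k] H) (H ⊗[k] H)) (v ⊗ₜ (b ⊗ₜ c)))) := by
  intro v b c
  induction v using TensorProduct.induction_on with
  | zero => simp
  | add v₁ v₂ h₁ h₂ =>
    simp only [map_add, add_tmul, smul_add, h₁, h₂]
  | tmul p w =>
    induction w using TensorProduct.induction_on with
    | zero => simp
    | add w₁ w₂ h₁ h₂ =>
      simp only [tmul_add, add_tmul, map_add, smul_add, h₁, h₂]
    | tmul q r =>
      simp only [phi_tmul, ← smul_tmul', map_smul, LinearEquiv.coe_coe, assoc_tmul,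
        map_tmul, LinearMap.id_coe, id_eq, psi_tmul, tmul_smul, smul_smul]
      rw [mul_comm]

lemma stepC : ∀ u : T3 k H,
    (TensorProduct.assoc k H H H)
        ((TensorProduct.map (comulOf k H μ α) LinearMap.id) (phi k H α u)) =
      psi k H α ((TensorProduct.map LinearMap.id
          (TensorProduct.assoc k H H (H ⊗[k] H)).toLinearMap)
        ((TensorProduct.assoc k H (H ⊗[k] H) (H ⊗[k] H))
          ((TensorProduct.map μ.toLinearMap LinearMap.id) u))) := by
  have := t3_eq k H
    ((TensorProduct.assoc k H H H).toLinearMap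
      ∘ₗ (TensorProduct.map (comulOf k H μ α) LinearMap.id) ∘ₗ phi k H α)
    ((psi k H α)
      ∘ₗ (TensorProduct.map LinearMap.id
            (TensorProduct.assoc k H H (H ⊗[k] H)).toLinearMap)
      ∘ₗ (TensorProduct.assoc k H (H ⊗[k] H) (H ⊗[k] H)).toLinearMap
      ∘ₗ (TensorProduct.map μ.toLinearMap LinearMap.id)) ?_
  · intro u; simpa using this u
  · intro a b c
    simp only [LinearMap.comp_apply, LinearEquiv.coe_coe, phi_tmul, map_smul, map_tmul,
      LinearMap.id_coe, id_eq, AlgHom.toLinearMap_apply]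
    rw [comulOf_eq]
    exact stepE k H α (μ a) b c

lemma stepK1 : ∀ v : T3 k H, ∀ b c : H,
    α b • (eta k H α v * c) =
      chi1 k H α ((TensorProduct.map LinearMap.id
          (TensorProduct.assoc k H H (H ⊗[k] H)).toLinearMap)
        ((TensorProduct.assoc k H (H ⊗[k] H) (H ⊗[k] H)) (v ⊗ₜ (b ⊗ₜ c)))) := by
  intro v b c
  induction v using TensorProduct.induction_on with
  | zero => simp
  | add v₁ v₂ h₁ h₂ =>
    simp only [map_add, add_tmul, add_mul, smul_add, h₁, h₂]
  | tmul p w =>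
    induction w using TensorProduct.induction_on with
    | zero => simp
    | add w₁ w₂ h₁ h₂ =>
      simp only [tmul_add, add_tmul, map_add, add_mul, smul_add, h₁, h₂]
    | tmul q r =>
      simp [eta_tmul, chi1_tmul, rho_tmul, smul_mul_assoc, mul_smul_comm, smul_smul,
        mul_comm, mul_left_comm]

lemma stepF1 : ∀ u : T3 k H,
    LinearMap.mul' k H
        ((TensorProduct.map (antipodeOf k H μ α) LinearMap.id) (phi k H α u)) =
      chi1 k H α ((TensorProduct.map LinearMap.id
          (TensorProduct.assoc k H H (H ⊗[k] H)).toLinearMap)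
        ((TensorProduct.assoc k H (H ⊗[k] H) (H ⊗[k] H))
          ((TensorProduct.map μ.toLinearMap LinearMap.id) u))) := by
  have := t3_eq k H
    (LinearMap.mul' k H
      ∘ₗ (TensorProduct.map (antipodeOf k H μ α) LinearMap.id) ∘ₗ phi k H α)
    ((chi1 k H α)
      ∘ₗ (TensorProduct.map LinearMap.id
            (TensorProduct.assoc k H H (H ⊗[k] H)).toLinearMap)
      ∘ₗ (TensorProduct.assoc k H (H ⊗[k] H) (H ⊗[k] H)).toLinearMap
      ∘ₗ (TensorProduct.map μ.toLinearMap LinearMap.id)) ?_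
  · intro u; simpa using this u
  · intro a b c
    simp only [LinearMap.comp_apply, LinearEquiv.coe_coe, phi_tmul, map_smul, map_tmul,
      LinearMap.id_coe, id_eq, AlgHom.toLinearMap_apply, LinearMap.mul'_apply,
      smul_mul_assoc]
    rw [antipodeOf_eq]
    exact stepK1 k H α (μ a) b c

lemma stepG1 (hμ : IsHopfGaloisMap k H μ) : ∀ u : T3 k H,
    chi1 k H α ((TensorProduct.map LinearMap.id
        (TensorProduct.map LinearMap.id μ.toLinearMap)) u) =
      (TensorProduct.lid k H)
        ((TensorProduct.map α.toLinearMap (LinearMap.mul' k H)) u) := by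
  have hrho : ∀ c : H, rho k H α (μ c) = c := by
    intro c
    rw [rho_eq, hμ.counit_left]
    simp
  have := t3_eq k H
    ((chi1 k H α) ∘ₗ (TensorProduct.map LinearMap.id
        (TensorProduct.map LinearMap.id μ.toLinearMap)))
    ((TensorProduct.lid k H).toLinearMap
      ∘ₗ (TensorProduct.map α.toLinearMap (LinearMap.mul' k H))) ?_
  · intro u; simpa using this u
  · intro a b c
    simp [chi1_tmul, hrho]

lemma stepH1 : ∀ u : T3 k H,
    (TensorProduct.lid k H) ((TensorProduct.map α.toLinearMap (LinearMap.mul' k H)) u) =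
      (TensorProduct.lid k H) ((TensorProduct.map α.toLinearMap LinearMap.id)
        (rightContr k H u)) := by
  have := t3_eq k H
    ((TensorProduct.lid k H).toLinearMap
      ∘ₗ (TensorProduct.map α.toLinearMap (LinearMap.mul' k H)))
    ((TensorProduct.lid k H).toLinearMap
      ∘ₗ (TensorProduct.map α.toLinearMap LinearMap.id) ∘ₗ rightContr k H) ?_
  · intro u; simpa using this u
  · intro a b c
    simp [rightContr_tmul]

lemma stepF2 : ∀ u : T3 k H,
    LinearMap.mul' k H
        ((TensorProduct.map LinearMap.id (antipodeOf k H μ α)) (phi k H α u)) =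
      chi2 k H α ((TensorProduct.map LinearMap.id
        (TensorProduct.map LinearMap.id μ.toLinearMap)) u) := by
  have := t3_eq k H
    (LinearMap.mul' k H
      ∘ₗ (TensorProduct.map LinearMap.id (antipodeOf k H μ α)) ∘ₗ phi k H α)
    ((chi2 k H α) ∘ₗ (TensorProduct.map LinearMap.id
        (TensorProduct.map LinearMap.id μ.toLinearMap))) ?_
  · intro u; simpa using this u
  · intro a b c
    simp only [LinearMap.comp_apply, phi_tmul, map_smul, map_tmul, LinearMap.id_coe,
      id_eq, AlgHom.toLinearMap_apply, LinearMap.mul'_apply, chi2_tmul]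
    rw [antipodeOf_eq]

lemma stepK2 : ∀ v : T3 k H, ∀ b c : H,
    chi2 k H α ((TensorProduct.map LinearMap.id
        (TensorProduct.assoc k H H (H ⊗[k] H)).toLinearMap)
      ((TensorProduct.assoc k H (H ⊗[k] H) (H ⊗[k] H)) (v ⊗ₜ (b ⊗ₜ c)))) =
      α c • (sigma k H α v * b) := by
  intro v b c
  induction v using TensorProduct.induction_on with
  | zero => simp
  | add v₁ v₂ h₁ h₂ =>
    simp only [map_add, add_tmul, add_mul, smul_add, h₁, h₂]
  | tmul p w =>
    induction w using TensorProduct.induction_on with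
    | zero => simp
    | add w₁ w₂ h₁ h₂ =>
      simp only [tmul_add, add_tmul, map_add, add_mul, smul_add, h₁, h₂]
    | tmul q r =>
      simp [eta_tmul, chi2_tmul, sigma_tmul, LinearEquiv.coe_coe, assoc_tmul,
        mul_smul_comm, smul_mul_assoc, smul_smul, mul_comm, mul_left_comm]

lemma stepG2 (hμ : IsHopfGaloisMap k H μ) : ∀ u : T3 k H,
    chi2 k H α ((TensorProduct.map LinearMap.id
        (TensorProduct.assoc k H H (H ⊗[k] H)).toLinearMap)
      ((TensorProduct.assoc k H (H ⊗[k] H) (H ⊗[k] H))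
        ((TensorProduct.map μ.toLinearMap LinearMap.id) u))) =
      (TensorProduct.rid k H)
        ((TensorProduct.map LinearMap.id α.toLinearMap) (leftContr k H u)) := by
  have hsig : ∀ a : H, sigma k H α (μ a) = a := by
    intro a
    rw [sigma_eq, hμ.counit_right]
    simp
  have := t3_eq k H
    ((chi2 k H α)
      ∘ₗ (TensorProduct.map LinearMap.id
            (TensorProduct.assoc k H H (H ⊗[k] H)).toLinearMap)
      ∘ₗ (TensorProduct.assoc k H (H ⊗[k] H) (H ⊗[k] H)).toLinearMap
      ∘ₗ (TensorProduct.map μ.toLinearMap LinearMap.id))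
    ((TensorProduct.rid k H).toLinearMap
      ∘ₗ (TensorProduct.map LinearMap.id α.toLinearMap) ∘ₗ leftContr k H) ?_
  · intro u; simpa using this u
  · intro a b c
    simp only [LinearMap.comp_apply, LinearEquiv.coe_coe, map_tmul, LinearMap.id_coe,
      id_eq, AlgHom.toLinearMap_apply]
    rw [stepK2 k H α (μ a) b c, hsig, leftContr_tmul]
    simp

end Mu

section Poisson

lemma pbrT3_zero_left (br : H →ₗ[k] H →ₗ[k] H) (v : T3 k H) :
    pbrT3 k H br 0 v = 0 := by simp [pbrT3]

lemma pbrT3_zero_right (br : H →ₗ[k] H →ₗ[k] H) (u : T3 k H) :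
    pbrT3 k H br u 0 = 0 := by simp [pbrT3]

lemma pbrT3_add_left (br : H →ₗ[k] H →ₗ[k] H) (u₁ u₂ v : T3 k H) :
    pbrT3 k H br (u₁ + u₂) v = pbrT3 k H br u₁ v + pbrT3 k H br u₂ v := by
  simp only [pbrT3, map_add, LinearMap.add_apply]; abel

lemma pbrT3_add_right (br : H →ₗ[k] H →ₗ[k] H) (u v₁ v₂ : T3 k H) :
    pbrT3 k H br u (v₁ + v₂) = pbrT3 k H br u v₁ + pbrT3 k H br u v₂ := by
  simp only [pbrT3, map_add]; abel

lemma pbrT2_zero_left (br : H →ₗ[k] H →ₗ[k] H) (v : H ⊗[k] H) :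
    pbrT2 k H br 0 v = 0 := by simp [pbrT2]

lemma pbrT2_zero_right (br : H →ₗ[k] H →ₗ[k] H) (u : H ⊗[k] H) :
    pbrT2 k H br u 0 = 0 := by simp [pbrT2]

lemma pbrT2_add_left (br : H →ₗ[k] H →ₗ[k] H) (u₁ u₂ v : H ⊗[k] H) :
    pbrT2 k H br (u₁ + u₂) v = pbrT2 k H br u₁ v + pbrT2 k H br u₂ v := by
  simp only [pbrT2, map_add, LinearMap.add_apply]; abel

lemma pbrT2_add_right (br : H →ₗ[k] H →ₗ[k] H) (u v₁ v₂ : H ⊗[k] H) :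
    pbrT2 k H br u (v₁ + v₂) = pbrT2 k H br u v₁ + pbrT2 k H br u v₂ := by
  simp only [pbrT2, map_add]; abel

lemma stepP (br : H →ₗ[k] H →ₗ[k] H) (hα : ∀ a b : H, α (br a b) = 0) :
    ∀ u v : T3 k H,
      phi k H α (pbrT3 k H br u v) = pbrT2 k H br (phi k H α u) (phi k H α v) := by
  intro u v
  induction u using TensorProduct.induction_on with
  | zero => simp [pbrT3_zero_left, pbrT2_zero_left]
  | add u₁ u₂ h₁ h₂ =>
    simp only [pbrT3_add_left, pbrT2_add_left, map_add, h₁, h₂]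
  | tmul a w =>
    induction w using TensorProduct.induction_on with
    | zero => simp [pbrT3_zero_left, pbrT2_zero_left, tmul_zero]
    | add w₁ w₂ h₁ h₂ =>
      simp only [tmul_add, pbrT3_add_left, pbrT2_add_left, map_add, h₁, h₂]
    | tmul b c =>
      induction v using TensorProduct.induction_on with
      | zero => simp [pbrT3_zero_right, pbrT2_zero_right]
      | add v₁ v₂ h₁ h₂ =>
        simp only [pbrT3_add_right, pbrT2_add_right, map_add, h₁, h₂]
      | tmul a' w' =>
        induction w' using TensorProduct.induction_on with
        | zero => simp [pbrT3_zero_right, pbrT2_zero_right, tmul_zero]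
        | add w₁ w₂ h₁ h₂ =>
          simp only [tmul_add, pbrT3_add_right, pbrT2_add_right, map_add, h₁, h₂]
        | tmul b' c' =>
          simp only [pbrT3, pbrT2, map₂_apply_tmul, map_tmul, LinearMap.mul_apply',
            map_sub, map_add, phi_tmul, map_smul, LinearMap.smul_apply, map_mul,
            hα, zero_smul, sub_zero, smul_smul]
          rw [mul_comm (α b') (α b)]
          abel

end Poisson

/-- If `H` is a Poisson Hopf-Galois algebra admitting an algebra map `α : H → k` with
`{H,H} ⊆ ker α`, then `H` is a Poisson Hopf algebra with counit `α`, comultiplication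
`Δ(x) = α(x₍₂₎) x₍₁₎ ⊗ x₍₃₎` and antipode `S(x) = α(x₍₁₎x₍₃₎) x₍₂₎`; in particular
`Δ({x,y}) = {Δ(x), Δ(y)}`. -/
theorem stmt9 [Nontrivial H]
    (br : H →ₗ[k] H →ₗ[k] H) (hbr : IsPoissonBracket k H br)
    (μ : H →ₐ[k] T3 k H) (hμ : IsHopfGaloisMap k H μ)
    (hP : ∀ a b : H, μ (br a b) = pbrT3 k H br (μ a) (μ b))
    (α : H →ₐ[k] k) (hα : ∀ a b : H, α (br a b) = 0) :
    (∀ x y : H, comulOf k H μ α (x * y) = comulOf k H μ α x * comulOf k H μ α y) ∧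
    comulOf k H μ α 1 = 1 ∧
    ((TensorProduct.assoc k H H H).toLinearMap
        ∘ₗ (TensorProduct.map (comulOf k H μ α) LinearMap.id) ∘ₗ comulOf k H μ α =
      (TensorProduct.map LinearMap.id (comulOf k H μ α)) ∘ₗ comulOf k H μ α) ∧
    (∀ x : H, (TensorProduct.lid k H)
        ((TensorProduct.map α.toLinearMap LinearMap.id) (comulOf k H μ α x)) = x) ∧
    (∀ x : H, (TensorProduct.rid k H)
        ((TensorProduct.map LinearMap.id α.toLinearMap) (comulOf k H μ α x)) = x) ∧
    (∀ x : H, LinearMap.mul' k H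
        ((TensorProduct.map (antipodeOf k H μ α) LinearMap.id) (comulOf k H μ α x)) =
      algebraMap k H (α x)) ∧
    (∀ x : H, LinearMap.mul' k H
        ((TensorProduct.map LinearMap.id (antipodeOf k H μ α)) (comulOf k H μ α x)) =
      algebraMap k H (α x)) ∧
    (∀ x y : H, comulOf k H μ α (br x y) =
      pbrT2 k H br (comulOf k H μ α x) (comulOf k H μ α y)) := by
  have coas : ∀ x : H,
      (TensorProduct.map LinearMap.id (TensorProduct.map LinearMap.id μ.toLinearMap))
          (μ x) =
        (TensorProduct.map LinearMap.id
            (TensorProduct.assoc k H H (H ⊗[k] H)).toLinearMap)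
          ((TensorProduct.assoc k H (H ⊗[k] H) (H ⊗[k] H))
            ((TensorProduct.map μ.toLinearMap LinearMap.id) (μ x))) := by
    intro x
    have := LinearMap.congr_fun hμ.coassoc x
    simpa using this
  refine ⟨?_, ?_, ?_, ?_, ?_, ?_, ?_, ?_⟩
  · intro x y
    rw [comulOf_eq, comulOf_eq, comulOf_eq, map_mul, phi_mul]
  · rw [comulOf_eq, map_one, phi_one]
  · apply LinearMap.ext; intro x
    simp only [LinearMap.comp_apply, LinearEquiv.coe_coe]
    rw [comulOf_eq, stepC k H α μ (μ x), stepA k H α μ (μ x), ← coas x]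
  · intro x
    rw [comulOf_eq, counitL k H α (μ x), hμ.counit_left]
    simp
  · intro x
    rw [comulOf_eq, counitR k H α (μ x), hμ.counit_right]
    simp
  · intro x
    rw [comulOf_eq, stepF1 k H α μ (μ x), ← coas x, stepG1 k H α μ hμ (μ x),
      stepH1 k H α (μ x), hμ.counit_right]
    simp [Algebra.algebraMap_eq_smul_one]
  · intro x
    rw [comulOf_eq, stepF2 k H α μ (μ x), coas x, stepG2 k H α μ hμ (μ x),
      hμ.counit_left]
    simp [Algebra.algebraMap_eq_smul_one]
  · intro x y
    rw [comulOf_eq, comulOf_eq, comulOf_eq, hP x y, stepP k H α br hα]
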